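/- Let ξ lie in the convex hull of {P_1,…,P_N}. Then the Legendre transform satisfies f̂(ξ) = sup_{x ∈ ℝⁿ}(⟨ξ,x⟩ − f(x)) = min { −∑_{i=1}^N λ_i c_i : λ_1,…,λ_N ≥ 0, ∑_i λ_i = 1, ∑_i λ_i P_i = ξ }, and this minimum is attained by some such convex combination. -/

import Mathlib

open scoped RealInnerProductSpace

lemma mem_hull_fin {E : Type*} [AddCommGroup E] [Module ℝ E] {N : ℕ}
    (Q : Fin N → E) (x : E) :
    x ∈ convexHull ℝ (Set.range Q) ↔
      ∃ μ : Fin N → ℝ, (∀ i, 0 ≤ μ i) ∧ (∑ i, μ i) = 1 ∧ (∑ i, μ i • Q i) = x := by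
  rw [convexHull_range_eq_exists_affineCombination]
  constructor
  · rintro ⟨t, w, hw0, hw1, hcomb⟩
    refine ⟨fun i => if i ∈ t then w i else 0,
      fun i => by by_cases h : i ∈ t <;> simp [h, hw0 i], ?_, ?_⟩
    · rw [Finset.sum_ite_mem, Finset.univ_inter, hw1]
    · rw [← hcomb, Finset.affineCombination_eq_linear_combination _ _ _ hw1]
      rw [← Finset.sum_subset (Finset.subset_univ t) (fun i _ hi => by simp [hi])]
      exact Finset.sum_congr rfl fun i hi => by simp [hi]
  · rintro ⟨μ, h0, h1, hx⟩
    exact ⟨Finset.univ, μ, fun i _ => h0 i, h1,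
      by rw [Finset.affineCombination_eq_linear_combination _ _ _ h1, hx]⟩

/-- for `ξ` in the convex hull of the `P_i`, the Legendre transform
`f̂(ξ) = sup_x (⟨ξ,x⟩ − f(x))` equals the minimum of `−∑ λ_i c_i` over all convex
combinations `∑ λ_i P_i = ξ`, and the minimum is attained. -/
theorem legendre_transform_eq_min_convex_combination
    (n N : ℕ) (hN : 1 ≤ N)
    (P : Fin N → EuclideanSpace ℝ (Fin n)) (w : Fin N → ℝ)
    (c : Fin N → ℝ) (hc : ∀ i, c i = -((‖P i‖ ^ 2 - w i) / 2))
    (fi : Fin N → EuclideanSpace ℝ (Fin n) → ℝ)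
    (hfi : ∀ i x, fi i x = ⟪x, P i⟫ + c i)
    (f : EuclideanSpace ℝ (Fin n) → ℝ)
    (hf : ∀ x, IsGreatest (Set.range fun i => fi i x) (f x))
    (ξ : EuclideanSpace ℝ (Fin n)) (hξ : ξ ∈ convexHull ℝ (Set.range P)) :
    ∃ lam : Fin N → ℝ,
      (∀ i, 0 ≤ lam i) ∧ (∑ i, lam i) = 1 ∧ (∑ i, lam i • P i) = ξ ∧
      (⨆ x, (⟪ξ, x⟫ - f x)) = -∑ i, lam i * c i ∧
      ∀ mu : Fin N → ℝ, (∀ i, 0 ≤ mu i) → (∑ i, mu i) = 1 →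
        (∑ i, mu i • P i) = ξ →
        -∑ i, lam i * c i ≤ -∑ i, mu i * c i := by
  classical
  let E := EuclideanSpace ℝ (Fin n)
  set S : Set (Fin N → ℝ) :=
    {l | (∀ i, 0 ≤ l i) ∧ (∑ i, l i) = 1 ∧ (∑ i, l i • P i) = ξ} with hSdef
  have hSne : S.Nonempty := by
    obtain ⟨μ, h0, h1, h2⟩ := (mem_hull_fin P ξ).mp hξ
    exact ⟨μ, h0, h1, h2⟩
  have hc1 : IsClosed {l : Fin N → ℝ | ∀ i, 0 ≤ l i} := by
    have : {l : Fin N → ℝ | ∀ i, 0 ≤ l i} = ⋂ i, {l | 0 ≤ l i} := by ext l; simp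
    rw [this]
    exact isClosed_iInter fun i => isClosed_le continuous_const (continuous_apply i)
  have hc2 : IsClosed {l : Fin N → ℝ | (∑ i, l i) = 1} :=
    isClosed_eq (continuous_finset_sum _ fun i _ => continuous_apply i) continuous_const
  have hc3 : IsClosed {l : Fin N → ℝ | (∑ i, l i • P i) = ξ} :=
    isClosed_eq (continuous_finset_sum _ fun i _ => (continuous_apply i).smul continuous_const)
      continuous_const
  have hS_closed : IsClosed S := by
    have : S = {l : Fin N → ℝ | ∀ i, 0 ≤ l i} ∩
        ({l | (∑ i, l i) = 1} ∩ {l | (∑ i, l i • P i) = ξ}) := rfl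
    rw [this]; exact hc1.inter (hc2.inter hc3)
  have hS_sub : S ⊆ Set.Icc 0 1 := by
    rintro l ⟨h0, h1, -⟩
    refine ⟨fun i => h0 i, fun i => ?_⟩
    calc l i ≤ ∑ j, l j := Finset.single_le_sum (fun j _ => h0 j) (Finset.mem_univ i)
    _ = 1 := h1
  have hS_cpt : IsCompact S := IsCompact.of_isClosed_subset isCompact_Icc hS_closed hS_sub
  obtain ⟨lam, hlamS, hmin⟩ := hS_cpt.exists_isMinOn hSne
    ((continuous_finset_sum _ fun i _ =>
      (continuous_apply i).mul continuous_const).neg.continuousOn :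
      ContinuousOn (fun l : Fin N → ℝ => -∑ i, l i * c i) S)
  obtain ⟨hlam0, hlam1, hlamP⟩ := hlamS
  -- upper bound
  have key : ∀ μ ∈ S, ∀ x : E, ⟪ξ, x⟫ - f x ≤ -∑ i, μ i * c i := by
    rintro μ ⟨h0, h1, h2⟩ x
    have hinner : ⟪ξ, x⟫ = ∑ i, μ i * ⟪P i, x⟫ := by
      rw [← h2, sum_inner]
      exact Finset.sum_congr rfl fun i _ => real_inner_smul_left _ _ _
    have hb : ∀ i, ⟪P i, x⟫ - f x ≤ -c i := by
      intro i
      have h' : fi i x ≤ f x := (hf x).2 ⟨i, rfl⟩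
      rw [hfi i x, real_inner_comm] at h'
      rename' h' => this
      linarith
    calc ⟪ξ, x⟫ - f x = ∑ i, μ i * (⟪P i, x⟫ - f x) := by
          simp only [mul_sub, Finset.sum_sub_distrib, ← Finset.sum_mul, h1, one_mul, hinner]
      _ ≤ ∑ i, μ i * (-c i) :=
          Finset.sum_le_sum fun i _ => mul_le_mul_of_nonneg_left (hb i) (h0 i)
      _ = -∑ i, μ i * c i := by simp [mul_neg]
  have hbdd : BddAbove (Set.range fun x : E => ⟪ξ, x⟫ - f x) :=
    ⟨-∑ i, lam i * c i, by rintro _ ⟨x, rfl⟩; exact key lam ⟨hlam0, hlam1, hlamP⟩ x⟩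
  have hle : (⨆ x : E, (⟪ξ, x⟫ - f x)) ≤ -∑ i, lam i * c i :=
    ciSup_le fun x => key lam ⟨hlam0, hlam1, hlamP⟩ x
  -- lower bound
  set s₀ : ℝ := ∑ i, lam i * c i with hs₀
  have hge : -s₀ ≤ ⨆ x : E, (⟪ξ, x⟫ - f x) := by
    refine le_of_forall_pos_le_add ?_
    intro ε hε
    set Q : Fin N → E × ℝ := fun i => (P i, c i) with hQ
    have hCcpt : IsCompact (convexHull ℝ (Set.range Q)) :=
      (Set.finite_range Q).isCompact_convexHull ℝ
    have hnotmem : (ξ, s₀ + ε) ∉ convexHull ℝ (Set.range Q) := by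
      intro hmem
      obtain ⟨μ, h0, h1, h2⟩ := (mem_hull_fin Q _).mp hmem
      have hfst : (∑ i, μ i • P i) = ξ := by
        have := congrArg Prod.fst h2
        simpa [Prod.fst_sum] using this
      have hsnd : (∑ i, μ i * c i) = s₀ + ε := by
        have := congrArg Prod.snd h2
        simpa [Prod.snd_sum, smul_eq_mul] using this
      have := isMinOn_iff.mp hmin μ ⟨h0, h1, hfst⟩
      change -s₀ ≤ -∑ i, μ i * c i at this; rw [hsnd] at this
      linarith
    obtain ⟨F, u, hFC, hFx⟩ := geometric_hahn_banach_closed_point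
      (convex_convexHull ℝ _) hCcpt.isClosed hnotmem
    set g : E →L[ℝ] ℝ := F.comp (ContinuousLinearMap.inl ℝ E ℝ) with hg
    set a : ℝ := F (0, 1) with hadef
    have hF : ∀ (p : E) (t : ℝ), F (p, t) = g p + t * a := by
      intro p t
      have hpt : (p, t) = (p, (0:ℝ)) + t • ((0:E), (1:ℝ)) := by
        simp [Prod.ext_iff]
      rw [hpt, map_add, map_smul]
      simp [hg, hadef, smul_eq_mul]
    have hQi : ∀ i, g (P i) + c i * a < u := by
      intro i
      have := hFC (Q i) (subset_convexHull ℝ _ ⟨i, rfl⟩)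
      rwa [hQ, hF] at this
    have hmemξ : (ξ, s₀) ∈ convexHull ℝ (Set.range Q) := by
      refine (mem_hull_fin Q _).mpr ⟨lam, hlam0, hlam1, ?_⟩
      refine Prod.ext ?_ ?_
      · simpa [Prod.fst_sum] using hlamP
      · simp [Prod.snd_sum, smul_eq_mul, hQ, hs₀]
    have hξs : g ξ + s₀ * a < u := by
      have := hFC _ hmemξ
      rwa [hF] at this
    have hgt : u < g ξ + (s₀ + ε) * a := by
      have := hFx
      rwa [hF] at this
    have ha : 0 < a := by nlinarith
    set y : E := (InnerProductSpace.toDual ℝ E).symm g with hy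
    have hyp : ∀ p : E, ⟪y, p⟫ = g p := fun p => InnerProductSpace.toDual_symm_apply
    set x₀ : E := a⁻¹ • y with hx₀
    have hxp : ∀ p : E, ⟪x₀, p⟫ = a⁻¹ * g p := by
      intro p
      rw [hx₀, real_inner_smul_left, hyp]
    have hfx : f x₀ < u / a := by
      obtain ⟨i, hi⟩ := (hf x₀).1
      have hi' : fi i x₀ = f x₀ := hi
      rw [← hi', hfi i x₀, hxp]
      have := hQi i
      rw [div_eq_inv_mul]
      have h2 : g (P i) < u - c i * a := by linarith
      calc a⁻¹ * g (P i) + c i < a⁻¹ * (u - c i * a) + c i := by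
            have := mul_lt_mul_of_pos_left h2 (inv_pos.mpr ha)
            linarith
        _ = a⁻¹ * u := by field_simp; ring
    have hinner : u / a - (s₀ + ε) < ⟪ξ, x₀⟫ := by
      rw [real_inner_comm, hxp]
      have h2 : u - (s₀ + ε) * a < g ξ := by linarith
      have := mul_lt_mul_of_pos_left h2 (inv_pos.mpr ha)
      rw [div_eq_inv_mul]
      have hne : a ≠ 0 := ne_of_gt ha
      calc a⁻¹ * u - (s₀ + ε) = a⁻¹ * (u - (s₀ + ε) * a) := by field_simp
        _ < a⁻¹ * g ξ := this
    have hval : -s₀ - ε < ⟪ξ, x₀⟫ - f x₀ := by linarith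
    have hsup := le_ciSup hbdd x₀
    linarith
  exact ⟨lam, hlam0, hlam1, hlamP, le_antisymm hle (by simpa using hge),
    fun mu h0 h1 h2 => isMinOn_iff.mp hmin mu ⟨h0, h1, h2⟩⟩
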